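/- Let t be a positive integer, G a P_t-free graph, and X, Y ⊆ V(G) disjoint sets where X is a stable set. Let Z_1, ..., Z_m be connected subsets of Y, pairwise disjoint, pairwise anticomplete (no edges between distinct Z_i, Z_j), and such that for every pair 1 ≤ i < j ≤ m there exists a vertex v_{i,j} ∈ X whose set of neighbors among Z_1, ..., Z_m meets exactly Z_i and Z_j (i.e., v_{i,j} has a neighbor in Z_h if and only if h ∈ {i,j}). Then m ≤ ⌈(t+1)/2⌉. -/

import Mathlib

lemma core_path {V : Type*} (G : SimpleGraph V) (Z : Set V)
    (hconn : (G.induce Z).Connected) (a b : V)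
    (hna : ∃ z ∈ Z, G.Adj a z) (hnb : ∃ z ∈ Z, G.Adj b z) :
    ∃ (n : ℕ) (f : ℕ → V), 0 < n ∧ (∀ i < n, f i ∈ Z) ∧
      (∀ i j, i < n → j < n → (G.Adj (f i) (f j) ↔ (i + 1 = j ∨ j + 1 = i))) ∧
      (∀ i j, i < n → j < n → f i = f j → i = j) ∧
      (∀ i < n, (G.Adj a (f i) ↔ i = 0)) ∧
      (∀ i < n, (G.Adj b (f i) ↔ i = n - 1)) := by
  classical
  obtain ⟨za, hza, haza⟩ := hna
  obtain ⟨zb, hzb, hbzb⟩ := hnb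
  have hPex : ∃ n : ℕ, 0 < n ∧ ∃ f : ℕ → V,
      (∀ i, i + 1 < n → G.Adj (f i) (f (i + 1))) ∧ (∀ i < n, f i ∈ Z) ∧
      G.Adj a (f 0) ∧ G.Adj b (f (n - 1)) := by
    obtain ⟨w⟩ := hconn.preconnected ⟨za, hza⟩ ⟨zb, hzb⟩
    refine ⟨w.length + 1, Nat.succ_pos _, fun i => (w.getVert i : V), ?_, ?_, ?_, ?_⟩
    · intro i hi
      exact w.adj_getVert_succ (by omega)
    · intro i _
      exact (w.getVert i).2
    · dsimp only
      rw [w.getVert_zero]; exact haza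
    · dsimp only
      simp only [Nat.add_sub_cancel]
      rw [w.getVert_length]; exact hbzb
  obtain ⟨n, ⟨hn0, f, hchain, hmem, hafa, hbfb⟩, hmin⟩ :
      ∃ n, (0 < n ∧ ∃ f : ℕ → V,
        (∀ i, i + 1 < n → G.Adj (f i) (f (i + 1))) ∧ (∀ i < n, f i ∈ Z) ∧
        G.Adj a (f 0) ∧ G.Adj b (f (n - 1))) ∧
        ∀ n' < n, ¬(0 < n' ∧ ∃ f : ℕ → V,
        (∀ i, i + 1 < n' → G.Adj (f i) (f (i + 1))) ∧ (∀ i < n', f i ∈ Z) ∧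
        G.Adj a (f 0) ∧ G.Adj b (f (n' - 1))) :=
    ⟨Nat.find hPex, Nat.find_spec hPex, fun n' h => Nat.find_min hPex h⟩
  have hbonly : ∀ i, i < n - 1 → ¬ G.Adj b (f i) := by
    intro i hi hadj
    exact hmin (i + 1) (by omega) ⟨by omega, f, fun l hl => hchain l (by omega),
      fun l hl => hmem l (by omega), hafa, by simpa using hadj⟩
  have haonly : ∀ i, 0 < i → i < n → ¬ G.Adj a (f i) := by
    intro i hi0 hin hadj
    refine hmin (n - i) (by omega) ⟨by omega, fun l => f (l + i), ?_, ?_, by simpa using hadj, ?_⟩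
    · intro l hl
      dsimp only
      have h1 : l + 1 + i = (l + i) + 1 := by omega
      rw [h1]
      exact hchain _ (by omega)
    · intro l hl; exact hmem _ (by omega)
    · dsimp only
      have h2 : n - i - 1 + i = n - 1 := by omega
      rw [h2]; exact hbfb
  have hchord : ∀ i j, i + 1 < j → j < n → ¬ G.Adj (f i) (f j) := by
    intro i j hij hj hadj
    refine hmin (n - (j - i - 1)) (by omega)
      ⟨by omega, fun l => if l ≤ i then f l else f (l + (j - i - 1)), ?_, ?_, ?_, ?_⟩
    · intro l hl
      dsimp only
      by_cases h1 : l + 1 ≤ i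
      · rw [if_pos (by omega), if_pos h1]
        exact hchain l (by omega)
      · by_cases h2 : l ≤ i
        · have hl_eq : l = i := by omega
          rw [if_pos h2, if_neg (by omega)]
          have h3 : l + 1 + (j - i - 1) = j := by omega
          rw [h3, hl_eq]
          exact hadj
        · rw [if_neg h2, if_neg (by omega)]
          have h3 : l + 1 + (j - i - 1) = (l + (j - i - 1)) + 1 := by omega
          rw [h3]
          exact hchain _ (by omega)
    · intro l hl
      dsimp only
      by_cases h2 : l ≤ i
      · rw [if_pos h2]; exact hmem l (by omega)
      · rw [if_neg h2]; exact hmem _ (by omega)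
    · dsimp only
      rw [if_pos (Nat.zero_le i)]; exact hafa
    · dsimp only
      rw [if_neg (by omega)]
      have h3 : n - (j - i - 1) - 1 + (j - i - 1) = n - 1 := by omega
      rw [h3]; exact hbfb
  have hdup : ∀ i j, i < j → j < n → f i ≠ f j := by
    intro i j hij hj heq
    rcases eq_or_lt_of_le (Nat.succ_le_of_lt hij) with h1 | h1
    · have h2 : G.Adj (f i) (f (i + 1)) := hchain i (by omega)
      rw [show i + 1 = j from h1, ← heq] at h2
      exact G.loopless.irrefl _ h2
    · by_cases hjl : j = n - 1
      · have h2 := hbfb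
        rw [← hjl, ← heq] at h2
        exact hbonly i (by omega) h2
      · refine hmin (n - (j - i)) (by omega)
          ⟨by omega, fun l => if l ≤ i then f l else f (l + (j - i)), ?_, ?_, ?_, ?_⟩
        · intro l hl
          dsimp only
          by_cases ha1 : l + 1 ≤ i
          · rw [if_pos (by omega), if_pos ha1]; exact hchain l (by omega)
          · by_cases ha2 : l ≤ i
            · have hle : l = i := by omega
              rw [if_pos ha2, if_neg (by omega), hle]
              have h3 : i + 1 + (j - i) = j + 1 := by omega
              rw [h3, heq]
              exact hchain j (by omega)
            · rw [if_neg ha2, if_neg (by omega)]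
              have h3 : l + 1 + (j - i) = (l + (j - i)) + 1 := by omega
              rw [h3]; exact hchain _ (by omega)
        · intro l hl
          dsimp only
          by_cases ha2 : l ≤ i
          · rw [if_pos ha2]; exact hmem l (by omega)
          · rw [if_neg ha2]; exact hmem _ (by omega)
        · dsimp only
          rw [if_pos (Nat.zero_le i)]; exact hafa
        · dsimp only
          rw [if_neg (by omega)]
          have h3 : n - (j - i) - 1 + (j - i) = n - 1 := by omega
          rw [h3]; exact hbfb
  refine ⟨n, f, hn0, hmem, ?_, ?_, ?_, ?_⟩
  · intro i j hi hj
    constructor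
    · intro hadj
      by_contra hc
      push_neg at hc
      rcases lt_trichotomy i j with h | h | h
      · exact hchord i j (by omega) hj hadj
      · exact G.loopless.irrefl _ (h ▸ hadj)
      · exact hchord j i (by omega) hi (G.symm.symm _ _ hadj)
    · rintro (rfl | rfl)
      · exact hchain i (by omega)
      · exact G.symm.symm _ _ (hchain j (by omega))
  · intro i j hi hj heq
    rcases lt_trichotomy i j with h | h | h
    · exact absurd heq (hdup i j h hj)
    · exact h
    · exact absurd heq.symm (hdup j i h hi)
  · intro i hi
    constructor
    · intro hadj
      by_contra hc
      exact haonly i (Nat.pos_of_ne_zero hc) hi hadj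
    · rintro rfl; exact hafa
  · intro i hi
    constructor
    · intro hadj
      by_contra hc
      exact hbonly i (by omega) hadj
    · rintro rfl; exact hbfb

/-- `H` occurs as an induced subgraph of `G`. -/
def IsInducedCopy {W V : Type*} (H : SimpleGraph W) (G : SimpleGraph V) : Prop :=
  ∃ f : W ↪ V, ∀ a b, G.Adj (f a) (f b) ↔ H.Adj a b

theorem stmt3 {V : Type*} (G : SimpleGraph V) (t : ℕ) (ht : 0 < t)
    (hfree : ¬ IsInducedCopy (SimpleGraph.pathGraph t) G)
    (X Y : Set V) (hXY : Disjoint X Y)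
    (hX : ∀ a ∈ X, ∀ b ∈ X, ¬ G.Adj a b)
    (m : ℕ) (Z : Fin m → Set V)
    (hZY : ∀ i, Z i ⊆ Y)
    (hZconn : ∀ i, (G.induce (Z i)).Connected)
    (hZdisj : ∀ i j, i ≠ j → Disjoint (Z i) (Z j))
    (hZanti : ∀ i j, i ≠ j → ∀ a ∈ Z i, ∀ b ∈ Z j, ¬ G.Adj a b)
    (v : ∀ i j : Fin m, i < j → V)
    (hv : ∀ (i j : Fin m) (hij : i < j), v i j hij ∈ X ∧
      ∀ h : Fin m, (∃ z ∈ Z h, G.Adj (v i j hij) z) ↔ (h = i ∨ h = j)) :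
    m ≤ (t + 2) / 2 := by
  by_contra hcon
  push_neg at hcon
  have hm2 : 2 ≤ m := by omega
  set A : ℕ → V := fun k =>
    if hk : k + 1 < m then v ⟨k, by omega⟩ ⟨k + 1, hk⟩ (Fin.mk_lt_mk.mpr (by omega))
    else v ⟨0, by omega⟩ ⟨1, by omega⟩ (Fin.mk_lt_mk.mpr (by omega)) with hAdef
  have hAX : ∀ k, k + 1 < m → A k ∈ X := by
    intro k hk
    simp only [hAdef]
    rw [dif_pos hk]
    exact (hv _ _ _).1
  have hAadj : ∀ k, k + 1 < m → ∀ h : Fin m,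
      (∃ z ∈ Z h, G.Adj (A k) z) ↔ ((h : ℕ) = k ∨ (h : ℕ) = k + 1) := by
    intro k hk h
    simp only [hAdef]
    rw [dif_pos hk, (hv _ _ _).2 h]
    constructor
    · rintro (rfl | rfl) <;> simp
    · rintro (h1 | h1)
      · left; exact Fin.ext h1
      · right; exact Fin.ext h1
  have hAnbr : ∀ k, k + 1 < m → ∀ h : Fin m, (h : ℕ) = k ∨ (h : ℕ) = k + 1 →
      ∃ z ∈ Z h, G.Adj (A k) z := fun k hk h hh => (hAadj k hk h).mpr hh
  have hAnadj : ∀ k, k + 1 < m → ∀ h : Fin m, (h : ℕ) ≠ k → (h : ℕ) ≠ k + 1 →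
      ∀ z ∈ Z h, ¬ G.Adj (A k) z := by
    intro k hk h h1 h2 z hz hadj
    rcases (hAadj k hk h).mp ⟨z, hz, hadj⟩ with h3 | h3
    · exact h1 h3
    · exact h2 h3
  have hAne : ∀ p k, p < k → k + 1 < m → A p ≠ A k := by
    intro p k hpk hk heq
    obtain ⟨z, hz, hadj⟩ := hAnbr k hk ⟨k + 1, hk⟩ (Or.inr rfl)
    rw [← heq] at hadj
    exact hAnadj p (by omega) ⟨k + 1, hk⟩ (show k + 1 ≠ p by omega)
      (show k + 1 ≠ p + 1 by omega) z hz hadj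
  -- main induction
  have key : ∀ k, 1 ≤ k → k ≤ m - 1 → ∃ (N : ℕ) (F : ℕ → V),
      2 * k - 1 ≤ N ∧
      (∀ i j, i < N → j < N → (G.Adj (F i) (F j) ↔ (i + 1 = j ∨ j + 1 = i))) ∧
      (∀ i j, i < N → j < N → F i = F j → i = j) ∧
      F (N - 1) = A (k - 1) ∧
      (∀ i < N, (∃ p, p < k ∧ F i = A p) ∨ (∃ h : Fin m, (h : ℕ) < k ∧ F i ∈ Z h)) := by
    intro k
    induction k with
    | zero => omega
    | succ k ih =>
      intro _ hkm
      rcases Nat.eq_zero_or_pos k with rfl | hk1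
      · refine ⟨1, fun _ => A 0, by omega, ?_, ?_, rfl, ?_⟩
        · intro i j hi hj
          have hi0 : i = 0 := by omega
          have hj0 : j = 0 := by omega
          subst hi0; subst hj0
          constructor
          · intro h; exact absurd h (G.loopless.irrefl _)
          · intro h; exact absurd h (by omega)
        · intro i j hi hj _; omega
        · intro i hi; exact Or.inl ⟨0, by omega, rfl⟩
      · have hkm' : k ≤ m - 1 := by omega
        obtain ⟨N, F, hlen, hadjF, hinjF, hlastF, hclassF⟩ := ih hk1 hkm'
        have hkm2 : k + 1 < m := by omega
        have hk1m : (k - 1) + 1 < m := by omega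
        have hkltm : k < m := by omega
        have hN1 : 1 ≤ N := by omega
        obtain ⟨n, f, hn0, hfmem, hfadj, hfinj, hfa, hfb⟩ :=
          core_path G (Z ⟨k, hkltm⟩) (hZconn _) (A (k - 1)) (A k)
            (hAnbr (k - 1) hk1m ⟨k, hkltm⟩ (Or.inr (show k = k - 1 + 1 by omega)))
            (hAnbr k hkm2 ⟨k, hkltm⟩ (Or.inl rfl))
        set F' : ℕ → V := fun i => if i < N then F i else if i < N + n then f (i - N) else A k
          with hF'
        have hO : ∀ i, i < N → F' i = F i := by
          intro i h; simp only [hF']; rw [if_pos h]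
        have hP : ∀ i, N ≤ i → i < N + n → F' i = f (i - N) := by
          intro i h1 h2; simp only [hF']; rw [if_neg (by omega), if_pos h2]
        have hL : ∀ i, i = N + n → F' i = A k := by
          intro i h; simp only [hF']; rw [if_neg (by omega), if_neg (by omega)]
        have hZkY : Z ⟨k, hkltm⟩ ⊆ Y := hZY _
        have hOnotZ : ∀ i, i < N → ∀ z ∈ Z ⟨k, hkltm⟩, F i ≠ z := by
          intro i hi z hz heq
          rcases hclassF i hi with ⟨p, hp, hFi⟩ | ⟨h, hh, hFi⟩
          · refine Set.disjoint_left.mp hXY (hAX p (by omega)) ?_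
            rw [← hFi, heq]; exact hZkY hz
          · refine Set.disjoint_left.mp
              (hZdisj h ⟨k, hkltm⟩ (Fin.ne_of_val_ne (show (h : ℕ) ≠ k by omega))) hFi ?_
            rw [heq]; exact hz
        have hOnadjZ : ∀ i, i < N - 1 → ∀ z ∈ Z ⟨k, hkltm⟩, ¬ G.Adj (F i) z := by
          intro i hi z hz hadj
          have hi' : i < N := by omega
          rcases hclassF i hi' with ⟨p, hp, hFi⟩ | ⟨h, hh, hFi⟩
          · have hpne : p ≠ k - 1 := by
              intro hpe
              have he2 : F i = F (N - 1) := by rw [hFi, hlastF, hpe]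
              have := hinjF i (N - 1) hi' (by omega) he2
              omega
            have hadj2 : G.Adj (A p) z := by rw [← hFi]; exact hadj
            exact hAnadj p (by omega) ⟨k, hkltm⟩ (show k ≠ p by omega)
              (show k ≠ p + 1 by omega) z hz hadj2
          · exact hZanti h ⟨k, hkltm⟩ (Fin.ne_of_val_ne (show (h : ℕ) ≠ k by omega))
              (F i) hFi z hz hadj
        have hOA : ∀ i, i < N → ¬ G.Adj (F i) (A k) ∧ F i ≠ A k := by
          intro i hi
          rcases hclassF i hi with ⟨p, hp, hFi⟩ | ⟨h, hh, hFi⟩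
          · constructor
            · rw [hFi]; exact hX _ (hAX p (by omega)) _ (hAX k hkm2)
            · rw [hFi]; exact hAne p k hp hkm2
          · constructor
            · intro hadj
              exact hAnadj k hkm2 h (by omega) (by omega) (F i) hFi (G.symm.symm _ _ hadj)
            · intro heq
              refine Set.disjoint_left.mp hXY (hAX k hkm2) ?_
              rw [← heq]; exact hZY h hFi
        have hPA : ∀ s, s < n → f s ≠ A k := by
          intro s hs heq
          refine Set.disjoint_left.mp hXY (hAX k hkm2) ?_
          rw [← heq]; exact hZkY (hfmem s hs)
        refine ⟨N + n + 1, F', by omega, ?_, ?_, ?_, ?_⟩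
        · have half : ∀ i j, i ≤ j → j < N + n + 1 →
              (G.Adj (F' i) (F' j) ↔ (i + 1 = j ∨ j + 1 = i)) := by
            intro i j hij hj
            by_cases hjN : j < N
            · rw [hO i (by omega), hO j hjN]
              exact hadjF i j (by omega) hjN
            · by_cases hjP : j < N + n
              · by_cases hiN : i < N
                · rw [hO i hiN, hP j (by omega) hjP]
                  by_cases hi1 : i = N - 1
                  · subst hi1
                    rw [hlastF, hfa (j - N) (by omega)]
                    omega
                  · constructor
                    · intro hadj
                      exact absurd hadj (hOnadjZ i (by omega) _ (hfmem (j - N) (by omega)))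
                    · intro hc; exact absurd hc (by omega)
                · rw [hP i (by omega) (by omega), hP j (by omega) hjP,
                    hfadj (i - N) (j - N) (by omega) (by omega)]
                  omega
              · have hjE : j = N + n := by omega
                subst hjE
                rw [hL _ rfl]
                by_cases hiN : i < N
                · rw [hO i hiN]
                  constructor
                  · intro hadj; exact absurd hadj (hOA i hiN).1
                  · intro hc; exact absurd hc (by omega)
                · by_cases hiP : i < N + n
                  · rw [hP i (by omega) hiP, G.adj_comm, hfb (i - N) (by omega)]
                    omega
                  · have hiE : i = N + n := by omega
                    subst hiE
                    rw [hL _ rfl]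
                    constructor
                    · intro hadj; exact absurd hadj (G.loopless.irrefl _)
                    · intro hc; exact absurd hc (by omega)
          intro i j hi hj
          rcases le_or_gt i j with h | h
          · exact half i j h hj
          · rw [G.adj_comm, half j i (le_of_lt h) hi]
            exact or_comm
        · have halfinj : ∀ i j, i < j → j < N + n + 1 → F' i ≠ F' j := by
            intro i j hij hj heq
            by_cases hjN : j < N
            · rw [hO i (by omega), hO j hjN] at heq
              exact absurd (hinjF i j (by omega) hjN heq) (by omega)
            · by_cases hjP : j < N + n
              · by_cases hiN : i < N
                · rw [hO i hiN, hP j (by omega) hjP] at heq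
                  exact hOnotZ i hiN _ (hfmem (j - N) (by omega)) heq
                · rw [hP i (by omega) (by omega), hP j (by omega) hjP] at heq
                  have := hfinj (i - N) (j - N) (by omega) (by omega) heq
                  omega
              · have hjE : j = N + n := by omega
                subst hjE
                rw [hL _ rfl] at heq
                by_cases hiN : i < N
                · rw [hO i hiN] at heq
                  exact (hOA i hiN).2 heq
                · rw [hP i (by omega) (by omega)] at heq
                  exact hPA (i - N) (by omega) heq
          intro i j hi hj heq
          rcases lt_trichotomy i j with h | h | h
          · exact absurd heq (halfinj i j h hj)
          · exact h
          · exact absurd heq.symm (halfinj j i h hi)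
        · have hNE : N + n + 1 - 1 = N + n := by omega
          rw [hNE, hL _ rfl]
          congr 1
        · intro i hi
          by_cases hiN : i < N
          · rw [hO i hiN]
            rcases hclassF i hiN with ⟨p, hp, hFi⟩ | ⟨h, hh, hFi⟩
            · exact Or.inl ⟨p, by omega, hFi⟩
            · exact Or.inr ⟨h, by omega, hFi⟩
          · by_cases hiP : i < N + n
            · rw [hP i (by omega) hiP]
              exact Or.inr ⟨⟨k, hkltm⟩, show k < k + 1 by omega, hfmem (i - N) (by omega)⟩
            · rw [hL i (by omega)]
              exact Or.inl ⟨k, by omega, rfl⟩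
  obtain ⟨N, F, hlen, hadjF, hinjF, -, -⟩ := key (m - 1) (by omega) le_rfl
  have htN : t ≤ N := by omega
  refine hfree ⟨⟨fun i : Fin t => F i, ?_⟩, ?_⟩
  · intro x y hxy
    exact Fin.ext (hinjF x y (lt_of_lt_of_le x.isLt htN) (lt_of_lt_of_le y.isLt htN) hxy)
  · intro x y
    show G.Adj (F x) (F y) ↔ (SimpleGraph.pathGraph t).Adj x y
    rw [hadjF x y (lt_of_lt_of_le x.isLt htN) (lt_of_lt_of_le y.isLt htN),
      SimpleGraph.pathGraph_adj]
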